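/- With the rank-one setup, let z ∈ ℂ with Re z > 0. Then the limit as t → +∞ of (2 cosh t)^{−l(z)} · φ_z(t) exists and equals (Γ(s + n/2) / Γ(n/2)) · c(z), where c(z) is the rank-one Harish-Chandra c-function. (This is the asymptotic behavior at infinity of the spherical function of K-type δ on a rank-one symmetric space.) -/

import Mathlib

open Complex Filter Topology

/-- Rising Pochhammer symbol `(a)_n = a (a+1) ⋯ (a+n-1)`. -/
noncomputable def poch (a : ℂ) (n : ℕ) : ℂ := (ascPochhammer ℂ n).eval a

/-- Gauss hypergeometric series `F(a,b;c;x)`. -/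
noncomputable def hypF (a b c x : ℂ) : ℂ :=
  ∑' n : ℕ, poch a n * poch b n / (poch c n * (n.factorial : ℂ)) * x ^ n

/-- `ρ_H = m_α/2 + m_{2α}`. -/
noncomputable def rhoH (mα m2α : ℕ) : ℂ := (mα : ℂ) / 2 + (m2α : ℂ)

/-- `l(z) = z - ρ_H`. -/
noncomputable def lFun (mα m2α : ℕ) (z : ℂ) : ℂ := z - rhoH mα m2α

/-- First hypergeometric parameter `a(z) = (s + r - l(z))/2`. -/
noncomputable def aFun (mα m2α : ℕ) (s r : ℤ) (z : ℂ) : ℂ :=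
  ((s : ℂ) + (r : ℂ) - lFun mα m2α z) / 2

/-- Second hypergeometric parameter `b(z) = (s - r - l(z) + 1 - m_{2α})/2`. -/
noncomputable def bFun (mα m2α : ℕ) (s r : ℤ) (z : ℂ) : ℂ :=
  ((s : ℂ) - (r : ℂ) - lFun mα m2α z + 1 - (m2α : ℂ)) / 2

/-- Third hypergeometric parameter `c₀ = s + (m_α + m_{2α} + 1)/2`. -/
noncomputable def cZero (mα m2α : ℕ) (s : ℤ) : ℂ :=
  (s : ℂ) + ((mα : ℂ) + (m2α : ℂ) + 1) / 2

/-- The constant `c_z` in front of the spherical function. -/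
noncomputable def cCoef (mα m2α : ℕ) (s r : ℤ) (z : ℂ) : ℂ :=
  (Complex.Gamma ((z + (mα : ℂ) / 2 + (m2α : ℂ) + (s : ℂ) + (r : ℂ)) / 2) /
      Complex.Gamma ((z + (mα : ℂ) / 2 + (m2α : ℂ)) / 2)) *
    (Complex.Gamma ((z + (mα : ℂ) / 2 + 1 + (s : ℂ) - (r : ℂ)) / 2) /
      Complex.Gamma ((z + (mα : ℂ) / 2 + 1) / 2))

/-- The spherical function
`φ_z(t) = c_z (tanh t)^s (cosh t)^{l(z)} F(a(z), b(z); c₀; tanh² t)`. -/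
noncomputable def sphFun (mα m2α : ℕ) (s r : ℤ) (z : ℂ) (t : ℝ) : ℂ :=
  cCoef mα m2α s r z * (Real.tanh t : ℂ) ^ s *
    (Real.cosh t : ℂ) ^ (lFun mα m2α z) *
    hypF (aFun mα m2α s r z) (bFun mα m2α s r z) (cZero mα m2α s)
      ((Real.tanh t ^ 2 : ℝ) : ℂ)

/-- The rank-one Harish-Chandra `c`-function
`c(z) = 2^{-l(z)} Γ(n/2) Γ(z) / (Γ(½(m_α/2 + 1 + z)) Γ(½(m_α/2 + m_{2α} + z)))`
with `n = m_α + m_{2α} + 1`. -/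
noncomputable def cHC (mα m2α : ℕ) (z : ℂ) : ℂ :=
  (2 : ℂ) ^ (-(lFun mα m2α z)) *
    Complex.Gamma (((mα : ℂ) + (m2α : ℂ) + 1) / 2) * Complex.Gamma z /
    (Complex.Gamma (((mα : ℂ) / 2 + 1 + z) / 2) *
      Complex.Gamma (((mα : ℂ) / 2 + (m2α : ℂ) + z) / 2))


/-! ### Auxiliary definitions and lemmas -/

noncomputable def pochR (a : ℝ) (n : ℕ) : ℝ := (ascPochhammer ℝ n).eval a
noncomputable def gterm (a b c : ℂ) (n : ℕ) : ℂ :=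
  poch a n * poch b n / (poch c n * (n.factorial : ℂ))

lemma poch_zero (a : ℂ) : poch a 0 = 1 := by simp [poch]
lemma poch_succ (a : ℂ) (n : ℕ) : poch a (n+1) = poch a n * (a + n) := by
  simp [poch, ascPochhammer_succ_right]
lemma poch_succ_left (a : ℂ) (n : ℕ) : poch a (n+1) = a * poch (a+1) n := by
  simp [poch, ascPochhammer_succ_left]
lemma pochR_zero (a : ℝ) : pochR a 0 = 1 := by simp [pochR]
lemma pochR_succ (a : ℝ) (n : ℕ) : pochR a (n+1) = pochR a n * (a + n) := by
  simp [pochR, ascPochhammer_succ_right]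
lemma pochR_succ_left (a : ℝ) (n : ℕ) : pochR a (n+1) = a * pochR (a+1) n := by
  simp [pochR, ascPochhammer_succ_left]

lemma poch_ne_zero {a : ℂ} (h : 0 < a.re) (n : ℕ) : poch a n ≠ 0 := by
  induction n with
  | zero => simp [poch_zero]
  | succ n ih =>
      rw [poch_succ]
      refine mul_ne_zero ih ?_
      intro hc
      have : (a + n).re = 0 := by rw [hc]; simp
      simp only [Complex.add_re, Complex.natCast_re] at this
      have : (0:ℝ) ≤ (n:ℝ) := n.cast_nonneg
      linarith [Complex.add_re a n ▸ (by rw [hc]; simp : (a + (n:ℂ)).re = 0)]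

lemma pochR_pos {a : ℝ} (h : 0 < a) (n : ℕ) : 0 < pochR a n := by
  induction n with
  | zero => simp [pochR_zero]
  | succ n ih => rw [pochR_succ]; positivity

lemma pochR_nonneg {a : ℝ} (h : 0 ≤ a) (n : ℕ) : 0 ≤ pochR a n := by
  induction n with
  | zero => simp [pochR_zero]
  | succ n ih =>
      rw [pochR_succ]
      have : (0:ℝ) ≤ (n:ℝ) := n.cast_nonneg
      nlinarith

lemma pochR_mono {a b : ℝ} (h0 : 0 ≤ a) (h : a ≤ b) (n : ℕ) : pochR a n ≤ pochR b n := by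
  induction n with
  | zero => simp [pochR_zero]
  | succ n ih =>
      rw [pochR_succ, pochR_succ]
      have h1 : 0 ≤ pochR a n := pochR_nonneg h0 n
      have hn : (0:ℝ) ≤ (n:ℝ) := n.cast_nonneg
      have h2 : 0 ≤ a + n := by linarith
      have h3 : a + n ≤ b + n := by linarith
      nlinarith

lemma norm_poch_le (a : ℂ) (n : ℕ) : ‖poch a n‖ ≤ pochR ‖a‖ n := by
  induction n with
  | zero => simp [poch_zero, pochR_zero]
  | succ n ih =>
      rw [poch_succ, pochR_succ, norm_mul]
      have h1 : ‖a + (n:ℂ)‖ ≤ ‖a‖ + n := by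
        calc ‖a + (n:ℂ)‖ ≤ ‖a‖ + ‖(n:ℂ)‖ := norm_add_le _ _
        _ = ‖a‖ + n := by simp
      exact mul_le_mul ih h1 (norm_nonneg _) ((norm_nonneg _).trans ih)

lemma pochR_le_norm_poch {c : ℂ} (h : 0 ≤ c.re) (n : ℕ) : pochR c.re n ≤ ‖poch c n‖ := by
  induction n with
  | zero => simp [poch_zero, pochR_zero]
  | succ n ih =>
      rw [poch_succ, pochR_succ, norm_mul]
      have h2 : c.re + n ≤ ‖c + (n:ℂ)‖ := by
        have : (c + (n:ℂ)).re = c.re + n := by simp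
        calc c.re + (n:ℝ) = (c + (n:ℂ)).re := this.symm
        _ ≤ ‖c + (n:ℂ)‖ := Complex.re_le_norm _
      have hp : 0 ≤ pochR c.re n := pochR_nonneg h n
      have hcn : 0 ≤ c.re + (n:ℝ) := by positivity
      exact mul_le_mul ih h2 hcn (norm_nonneg _)

lemma ofReal_pochR (a : ℝ) (n : ℕ) : ((pochR a n : ℝ) : ℂ) = poch (a:ℂ) n := by
  induction n with
  | zero => simp [poch_zero, pochR_zero]
  | succ n ih => rw [pochR_succ, poch_succ]; push_cast [ih]; ring

lemma norm_gterm_succ (a b c : ℂ) (n : ℕ) :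
    ‖gterm a b c (n+1)‖ = ‖gterm a b c n‖ * (‖a+(n:ℂ)‖*‖b+(n:ℂ)‖/(‖c+(n:ℂ)‖*((n:ℝ)+1))) := by
  have h : gterm a b c (n+1) =
      poch a n * (a+n) * (poch b n * (b+n)) / (poch c n * (c+n) * ((n.factorial : ℂ) * ((n:ℂ)+1))) := by
    rw [gterm, poch_succ, poch_succ, poch_succ, Nat.factorial_succ]
    push_cast; ring_nf
  rw [h, gterm]
  simp only [div_eq_mul_inv, norm_mul, norm_inv, mul_inv, Complex.norm_natCast]
  have h2 : ‖(n:ℂ)+1‖ = (n:ℝ)+1 := by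
    have h3 : ((n:ℂ)+1) = (((n:ℝ)+1 : ℝ) : ℂ) := by push_cast; ring
    rw [h3, Complex.norm_real, Real.norm_eq_abs, _root_.abs_of_nonneg (by positivity)]
  rw [h2]; ring

lemma eventually_cubic (d p2 p1 p0 : ℝ) (hd : 0 < d) :
    ∀ᶠ x : ℝ in atTop, 0 ≤ d*x^3 + p2*x^2 + p1*x + p0 := by
  have hlim : Tendsto (fun x : ℝ => d + p2*x⁻¹ + p1*x⁻¹*x⁻¹ + p0*x⁻¹*x⁻¹*x⁻¹) atTop
      (𝓝 (d + p2*0 + p1*0*0 + p0*0*0*0)) := by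
    have hi : Tendsto (fun x : ℝ => x⁻¹) atTop (𝓝 0) := tendsto_inv_atTop_zero
    exact ((((tendsto_const_nhds.add (tendsto_const_nhds.mul hi)).add
      (((tendsto_const_nhds.mul hi)).mul hi)).add
      (((tendsto_const_nhds.mul hi).mul hi).mul hi)))
  simp only [mul_zero, add_zero, zero_mul] at hlim
  have hev : ∀ᶠ x : ℝ in atTop, 0 < d + p2*x⁻¹ + p1*x⁻¹*x⁻¹ + p0*x⁻¹*x⁻¹*x⁻¹ :=
    hlim.eventually_const_lt hd
  filter_upwards [hev, eventually_gt_atTop (0:ℝ)] with x hx hx0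
  have key : d*x^3 + p2*x^2 + p1*x + p0
      = (d + p2*x⁻¹ + p1*x⁻¹*x⁻¹ + p0*x⁻¹*x⁻¹*x⁻¹) * x^3 := by
    field_simp
  rw [key]; positivity

lemma sqrt_aux {α C x : ℝ} (hC : 0 ≤ C) (hx : 2*|α|+1 ≤ x) :
    x * Real.sqrt ((α+x)^2 + C) ≤ x^2 + α*x + C := by
  have hx0 : 0 < x := lt_of_lt_of_le (by positivity) hx
  have hα : -|α| ≤ α := neg_abs_le α
  have hα' : α ≤ |α| := le_abs_self α
  have h1 : |α| ≤ x + α := by linarith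
  have h2 : α^2 ≤ (x+α)^2 := by nlinarith [abs_nonneg α, _root_.sq_abs α]
  have hrhs : 0 ≤ x^2 + α*x + C := by nlinarith
  have key : x^2 * ((α+x)^2 + C) ≤ (x^2 + α*x + C)^2 := by nlinarith
  calc x * Real.sqrt ((α+x)^2 + C) = Real.sqrt (x^2 * ((α+x)^2 + C)) := by
        rw [Real.sqrt_mul (by positivity), Real.sqrt_sq hx0.le]
    _ ≤ Real.sqrt ((x^2 + α*x + C)^2) := Real.sqrt_le_sqrt key
    _ = x^2 + α*x + C := Real.sqrt_sq hrhs

lemma norm_add_real (a : ℂ) (x : ℝ) : ‖a + (x:ℂ)‖ = Real.sqrt ((a.re + x)^2 + a.im^2) := by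
  rw [Complex.norm_def, Complex.normSq_apply]
  congr 1
  simp only [Complex.add_re, Complex.add_im, Complex.ofReal_re, Complex.ofReal_im, add_zero]
  ring

lemma step_ineq (a b c : ℂ) (hε : 0 < (c-a-b).re) :
    ∀ᶠ x : ℝ in atTop,
      ‖a+(x:ℂ)‖*‖b+(x:ℂ)‖/(‖c+(x:ℂ)‖*(x+1)) ≤ x ^ (1+(c-a-b).re/2) / (x+1) ^ (1+(c-a-b).re/2) := by
  set ε := (c-a-b).re with hεdef
  set q : ℝ := 1 + ε/2 with hq
  set α := a.re; set β := b.re; set γ := c.re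
  set Ca := a.im^2 with hCa; set Cb := b.im^2 with hCb
  have hγ : γ = α + β + ε := by
    show c.re = a.re + b.re + (c-a-b).re
    simp only [Complex.sub_re]; ring
  have hq1 : 1 ≤ q := by simp [hq]; linarith
  have hq0 : 0 < q := by linarith
  have hcub := eventually_cubic (ε/2) (γ - q*(γ+1) - Ca - Cb - α*β) (-(q*γ) - α*Cb - β*Ca)
    (-(Ca*Cb)) (by linarith)
  filter_upwards [hcub, eventually_ge_atTop (2*|α|+1), eventually_ge_atTop (2*|β|+1),
    eventually_ge_atTop (1:ℝ), eventually_ge_atTop (-γ+1), eventually_ge_atTop (q+1)]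
    with x hcubx hxa hxb hx1 hxγ hxq
  have hx0 : (0:ℝ) < x := by linarith
  have hxγ' : 0 < x + γ := by linarith
  have hna := sqrt_aux (α := α) (C := Ca) (sq_nonneg _) hxa
  have hnb := sqrt_aux (α := β) (C := Cb) (sq_nonneg _) hxb
  rw [← norm_add_real] at hna hnb
  have hnc : x + γ ≤ ‖c + (x:ℂ)‖ := by
    have : (c + (x:ℂ)).re = γ + x := by simp [γ]
    calc x + γ = (c + (x:ℂ)).re := by rw [this]; ring
      _ ≤ ‖c + (x:ℂ)‖ := Complex.re_le_norm _
  have hna0 : 0 ≤ ‖a + (x:ℂ)‖ := norm_nonneg _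
  have hnb0 : 0 ≤ ‖b + (x:ℂ)‖ := norm_nonneg _
  have hA0 : 0 ≤ x^2 + α*x + Ca := le_trans (by positivity) hna
  have hB0 : 0 ≤ x^2 + β*x + Cb := le_trans (by positivity) hnb
  -- polynomial inequality
  have hpoly : (x^2+α*x+Ca)*(x^2+β*x+Cb) ≤ (x+γ)*(x+1)*(x-q)*x := by
    have hid : (x+γ)*(x+1)*(x-q)*x - (x^2+α*x+Ca)*(x^2+β*x+Cb)
        = (ε/2)*x^3 + (γ - q*(γ+1) - Ca - Cb - α*β)*x^2 + (-(q*γ) - α*Cb - β*Ca)*x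
          + (-(Ca*Cb)) := by rw [hγ, hq]; ring
    have h' : 0 ≤ (x+γ)*(x+1)*(x-q)*x - (x^2+α*x+Ca)*(x^2+β*x+Cb) := by
      rw [hid]; exact hcubx
    linarith [h']
  have hprod : ‖a+(x:ℂ)‖*‖b+(x:ℂ)‖*x^2 ≤ (x+γ)*(x+1)*(x-q)*x := by
    calc ‖a+(x:ℂ)‖*‖b+(x:ℂ)‖*x^2 = (x*‖a+(x:ℂ)‖)*(x*‖b+(x:ℂ)‖) := by ring
      _ ≤ (x^2+α*x+Ca)*(x^2+β*x+Cb) := by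
          apply mul_le_mul hna hnb (by positivity) hA0
      _ ≤ (x+γ)*(x+1)*(x-q)*x := hpoly
  -- so the ratio is at most 1 - q/x
  have hq2 : 0 < x - q := by linarith
  have hnc0 : (0:ℝ) < ‖c+(x:ℂ)‖ := lt_of_lt_of_le hxγ' hnc
  have hstep1 : ‖a+(x:ℂ)‖*‖b+(x:ℂ)‖/(‖c+(x:ℂ)‖*(x+1)) ≤ (x-q)/x := by
    rw [div_le_div_iff₀ (by positivity : (0:ℝ) < ‖c+(x:ℂ)‖*(x+1)) hx0]
    have hprod' : (‖a+(x:ℂ)‖*‖b+(x:ℂ)‖*x)*x ≤ ((x+γ)*(x+1)*(x-q))*x := by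
      calc (‖a+(x:ℂ)‖*‖b+(x:ℂ)‖*x)*x = ‖a+(x:ℂ)‖*‖b+(x:ℂ)‖*x^2 := by ring
        _ ≤ (x+γ)*(x+1)*(x-q)*x := hprod
        _ = ((x+γ)*(x+1)*(x-q))*x := by ring
    have h1 : ‖a+(x:ℂ)‖*‖b+(x:ℂ)‖*x ≤ (x+γ)*(x+1)*(x-q) :=
      le_of_mul_le_mul_right hprod' hx0
    have h2 : (x+γ)*((x+1)*(x-q)) ≤ ‖c+(x:ℂ)‖*((x+1)*(x-q)) :=
      mul_le_mul_of_nonneg_right hnc (mul_nonneg (by linarith) hq2.le)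
    calc ‖a+(x:ℂ)‖*‖b+(x:ℂ)‖*x ≤ (x+γ)*(x+1)*(x-q) := h1
      _ = (x+γ)*((x+1)*(x-q)) := by ring
      _ ≤ ‖c+(x:ℂ)‖*((x+1)*(x-q)) := h2
      _ = (x-q)*(‖c+(x:ℂ)‖*(x+1)) := by ring
  -- and 1 - q/x ≤ (x/(x+1))^q
  have hstep2 : (x-q)/x ≤ (x/(x+1)) ^ q := by
    have hxx : (0:ℝ) < x/(x+1) := by positivity
    rw [Real.rpow_def_of_pos hxx]
    have h1 : (x-q)/x = 1 - q/x := by field_simp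
    have h2 : 1 - q/x ≤ Real.exp (-(q/x)) := by linarith [Real.add_one_le_exp (-(q/x))]
    have h3 : Real.exp (-(q/x)) ≤ Real.exp (Real.log (x/(x+1)) * q) := by
      apply Real.exp_le_exp.mpr
      have hlog : Real.log ((x+1)/x) ≤ 1/x := by
        have := Real.log_le_sub_one_of_pos (x := (x+1)/x) (by positivity)
        have he : (x+1)/x - 1 = 1/x := by field_simp; ring
        linarith [this, he]
      have hinv : Real.log (x/(x+1)) = -Real.log ((x+1)/x) := by
        rw [← Real.log_inv]; congr 1; rw [inv_div]
      rw [hinv]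
      have : -(1/x) ≤ -Real.log ((x+1)/x) := by linarith
      calc -(q/x) = (-(1/x))*q := by ring
        _ ≤ (-Real.log ((x+1)/x))*q := by
            apply mul_le_mul_of_nonneg_right this hq0.le
        _ = -Real.log ((x+1)/x) * q := rfl
    rw [h1]; exact h2.trans h3
  have hfin : (x/(x+1)) ^ q = x ^ q / (x+1) ^ q :=
    Real.div_rpow hx0.le (by positivity : (0:ℝ) ≤ x+1) q
  calc ‖a+(x:ℂ)‖*‖b+(x:ℂ)‖/(‖c+(x:ℂ)‖*(x+1)) ≤ (x-q)/x := hstep1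
    _ ≤ (x/(x+1)) ^ q := hstep2
    _ = x ^ q / (x+1) ^ q := hfin

lemma gterm_bound (a b c : ℂ) (hε : 0 < (c-a-b).re) :
    ∃ (K : ℝ) (J : ℕ), 0 < J ∧ 0 ≤ K ∧ ∀ n, J ≤ n →
      ‖gterm a b c n‖ ≤ K * (n:ℝ) ^ (-(1 + (c-a-b).re/2)) := by
  set q : ℝ := 1 + (c-a-b).re/2 with hq
  have hq0 : 0 < q := by rw [hq]; linarith
  have hnat : ∀ᶠ n : ℕ in atTop,
      ‖a+(n:ℂ)‖*‖b+(n:ℂ)‖/(‖c+(n:ℂ)‖*((n:ℝ)+1)) ≤ (n:ℝ) ^ q / ((n:ℝ)+1) ^ q := by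
    have := tendsto_natCast_atTop_atTop (R := ℝ) |>.eventually (step_ineq a b c hε)
    simpa [hq] using this
  obtain ⟨J₀, hJ₀⟩ := eventually_atTop.mp hnat
  set J := max J₀ 1 with hJdef
  have hJ1 : 1 ≤ J := le_max_right _ _
  refine ⟨‖gterm a b c J‖ * (J:ℝ) ^ q, J, by omega, by positivity, ?_⟩
  intro n hn
  induction n, hn using Nat.le_induction with
  | base =>
      have hJpos : (0:ℝ) < (J:ℝ) := by exact_mod_cast hJ1
      rw [mul_assoc, ← Real.rpow_add hJpos, add_neg_cancel, Real.rpow_zero, mul_one]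
  | succ n hJn ih =>
      have hn0 : (0:ℝ) < (n:ℝ) := by
        have : 1 ≤ n := le_trans hJ1 hJn
        exact_mod_cast this
      have hratio := hJ₀ n (le_trans (le_max_left _ _) hJn)
      have hrec := norm_gterm_succ a b c n
      have hKb : 0 ≤ ‖gterm a b c J‖ * (J:ℝ) ^ q := by positivity
      calc ‖gterm a b c (n+1)‖
          = ‖gterm a b c n‖ * (‖a+(n:ℂ)‖*‖b+(n:ℂ)‖/(‖c+(n:ℂ)‖*((n:ℝ)+1))) := hrec
        _ ≤ (‖gterm a b c J‖ * (J:ℝ) ^ q * (n:ℝ) ^ (-q)) * ((n:ℝ) ^ q / ((n:ℝ)+1) ^ q) := by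
            apply mul_le_mul ih hratio (by positivity) (by positivity)
        _ = ‖gterm a b c J‖ * (J:ℝ) ^ q * ((n:ℝ) ^ (-q) * (n:ℝ) ^ q) * (((n:ℝ)+1) ^ q)⁻¹ := by
            rw [div_eq_mul_inv]; ring
        _ = ‖gterm a b c J‖ * (J:ℝ) ^ q * (((n:ℝ)+1) ^ q)⁻¹ := by
            rw [show (n:ℝ) ^ (-q) * (n:ℝ) ^ q = 1 by rw [← Real.rpow_add hn0]; simp, mul_one]
        _ = ‖gterm a b c J‖ * (J:ℝ) ^ q * ((n:ℝ)+1) ^ (-q) := by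
            rw [Real.rpow_neg (by positivity)]
        _ = ‖gterm a b c J‖ * (J:ℝ) ^ q * (((n:ℕ)+1 : ℕ):ℝ) ^ (-q) := by push_cast; ring

lemma summable_norm_gterm (a b c : ℂ) (hε : 0 < (c-a-b).re) :
    Summable (fun n => ‖gterm a b c n‖) := by
  obtain ⟨K, J, hJ, hK, hbd⟩ := gterm_bound a b c hε
  set q : ℝ := 1 + (c-a-b).re/2 with hq
  rw [← summable_nat_add_iff J]
  have hsum : Summable (fun n : ℕ => K * ((n+J : ℕ):ℝ) ^ (-q)) := by
    apply Summable.mul_left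
    exact (summable_nat_add_iff (f := fun n : ℕ => ((n:ℝ) ^ (-q))) J).mpr
      (Real.summable_nat_rpow.mpr (by rw [hq]; linarith))
  apply Summable.of_nonneg_of_le (fun n => norm_nonneg _) (fun n => ?_) hsum
  exact hbd (n+J) (by omega)

lemma tendsto_mul_norm_gterm (a b c : ℂ) (hε : 0 < (c-a-b).re) :
    Tendsto (fun n : ℕ => (n:ℝ) * ‖gterm a b c n‖) atTop (𝓝 0) := by
  obtain ⟨K, J, hJ, hK, hbd⟩ := gterm_bound a b c hε
  set q : ℝ := 1 + (c-a-b).re/2 with hq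
  have hup : Tendsto (fun n : ℕ => K * (n:ℝ) ^ (1-q)) atTop (𝓝 0) := by
    have h1 : Tendsto (fun x : ℝ => K * x ^ (-(q-1))) atTop (𝓝 (K * 0)) :=
      (tendsto_rpow_neg_atTop (by rw [hq]; linarith)).const_mul K
    rw [mul_zero] at h1
    have := h1.comp (tendsto_natCast_atTop_atTop (R := ℝ))
    convert this using 2 with n
    rw [Function.comp_apply]
    norm_num
  apply squeeze_zero' (Filter.Eventually.of_forall (fun n => by positivity))
    ?_ hup
  filter_upwards [eventually_ge_atTop J, eventually_ge_atTop 1] with n hn hn1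
  have hn0 : (0:ℝ) < (n:ℝ) := by exact_mod_cast hn1
  calc (n:ℝ) * ‖gterm a b c n‖ ≤ (n:ℝ) * (K * (n:ℝ) ^ (-q)) := by
        exact mul_le_mul_of_nonneg_left (hbd n hn) hn0.le
    _ = K * ((n:ℝ)^(1:ℝ) * (n:ℝ) ^ (-q)) := by rw [Real.rpow_one]; ring
    _ = K * (n:ℝ) ^ (1-q) := by rw [← Real.rpow_add hn0]; ring_nf

lemma summable_gterm (a b c : ℂ) (hε : 0 < (c-a-b).re) : Summable (gterm a b c) :=
  (summable_norm_gterm a b c hε).of_norm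

lemma re_pos_ne_zero {w : ℂ} (h : 0 < w.re) : w ≠ 0 := by
  intro h0; rw [h0] at h; simp at h

lemma re_add_nat_pos {w : ℂ} (h : 0 < w.re) (n : ℕ) : 0 < (w + n).re := by
  simp only [Complex.add_re, Complex.natCast_re]
  have : (0:ℝ) ≤ n := n.cast_nonneg
  linarith

lemma gterm_zero (a b c : ℂ) : gterm a b c 0 = 1 := by
  simp [gterm, poch_zero]

set_option maxHeartbeats 1600000 in
lemma contiguous (a b c : ℂ) (hc : 0 < c.re) (hε : 0 < (c-a-b).re) :
    ∑' n, gterm a b c n = ((c-a)*(c-b)/(c*(c-a-b))) * ∑' n, gterm a b (c+1) n := by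
  set K : ℂ := (c-a)*(c-b)/(c*(c-a-b)) with hK
  set u : ℕ → ℂ := fun n => n * gterm a b c n / (c-a-b) with hu
  have hc0 : c ≠ 0 := re_pos_ne_zero hc
  have hz0 : c - a - b ≠ 0 := re_pos_ne_zero hε
  have hc1 : 0 < (c+1).re := by simp [Complex.add_re]; linarith
  have hε1 : 0 < ((c+1)-a-b).re := by
    simp only [Complex.sub_re, Complex.add_re, Complex.one_re]
    simp only [Complex.sub_re] at hε; linarith
  have hid : ∀ n : ℕ, gterm a b c n - K * gterm a b (c+1) n = u n - u (n+1) := by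
    intro n
    have hpc : poch c n ≠ 0 := poch_ne_zero hc n
    have hf : (n.factorial : ℂ) ≠ 0 := Nat.cast_ne_zero.mpr n.factorial_ne_zero
    have hcn : (c + n) ≠ 0 := re_pos_ne_zero (re_add_nat_pos hc n)
    have hn1 : ((n:ℂ)+1) ≠ 0 := by
      intro h
      have := congrArg Complex.re h
      simp only [Complex.add_re, Complex.natCast_re, Complex.one_re, Complex.zero_re] at this
      have h2 : (0:ℝ) ≤ (n:ℝ) := n.cast_nonneg
      linarith
    have hrel : c * poch (c+1) n = poch c n * (c+n) := by
      rw [← poch_succ_left, poch_succ]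
    have hsub : poch (c+1) n = poch c n * (c+n)/c := by
      rw [eq_div_iff hc0]; linear_combination hrel
    have e1 : gterm a b (c+1) n = poch a n * poch b n * c / (poch c n * (c+n) * n.factorial) := by
      rw [gterm, hsub]
      field_simp
    have e2 : gterm a b c (n+1) = poch a n * (a+n) * (poch b n * (b+n)) /
        (poch c n * (c+n) * (n.factorial * ((n:ℂ)+1))) := by
      rw [gterm, poch_succ a, poch_succ b, poch_succ c, Nat.factorial_succ]
      rw [show (((n + 1) * n.factorial : ℕ) : ℂ) = (n.factorial : ℂ) * ((n:ℂ)+1) by push_cast; ring]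
    have hD1 : poch c n * (n.factorial:ℂ) ≠ 0 := mul_ne_zero hpc hf
    have hD2 : (c*(c-a-b)) * (poch c n * (c+n) * (n.factorial:ℂ)) ≠ 0 :=
      mul_ne_zero (mul_ne_zero hc0 hz0) (mul_ne_zero (mul_ne_zero hpc hcn) hf)
    have hD3 : (poch c n * (n.factorial:ℂ)) * (c-a-b) ≠ 0 := mul_ne_zero hD1 hz0
    have hD4 : (poch c n * (c+n) * ((n.factorial:ℂ) * ((n:ℂ)+1))) * (c-a-b) ≠ 0 :=
      mul_ne_zero (mul_ne_zero (mul_ne_zero hpc hcn) (mul_ne_zero hf hn1)) hz0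
    have L1 : K * gterm a b (c+1) n = ((c-a)*(c-b)*(poch a n * poch b n * c)) /
        ((c*(c-a-b)) * (poch c n * (c+n) * (n.factorial:ℂ))) := by
      rw [e1, hK, div_mul_div_comm]
    have R1 : u n = ((n:ℂ) * (poch a n * poch b n)) / ((poch c n * (n.factorial:ℂ)) * (c-a-b)) := by
      show (n:ℂ) * gterm a b c n / (c-a-b) = _
      rw [gterm, ← mul_div_assoc, div_div]
    have R2 : u (n+1) = (((n:ℂ)+1) * (poch a n * (a+(n:ℂ)) * (poch b n * (b+(n:ℂ))))) /
        ((poch c n * (c+(n:ℂ)) * ((n.factorial:ℂ) * ((n:ℂ)+1))) * (c-a-b)) := by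
      show ((n+1 : ℕ):ℂ) * gterm a b c (n+1) / (c-a-b) = _
      rw [e2, ← mul_div_assoc, div_div]
      norm_cast
    rw [R1, R2, L1, gterm, div_sub_div _ _ hD1 hD2, div_sub_div _ _ hD3 hD4,
      div_eq_div_iff (mul_ne_zero hD1 hD2) (mul_ne_zero hD3 hD4)]
    ring
  have hS1 : Summable (gterm a b c) := summable_gterm a b c hε
  have hS2 : Summable (gterm a b (c+1)) := summable_gterm a b (c+1) hε1
  have hsum : Summable (fun n => gterm a b c n - K * gterm a b (c+1) n) :=
    hS1.sub (hS2.mul_left K)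
  have hu0 : Tendsto u atTop (𝓝 0) := by
    rw [tendsto_zero_iff_norm_tendsto_zero]
    have : (fun n : ℕ => ‖u n‖) = fun n : ℕ => ((n:ℝ) * ‖gterm a b c n‖) * ‖(c-a-b)‖⁻¹ := by
      funext n
      simp only [hu, norm_div, norm_mul, Complex.norm_natCast, div_eq_mul_inv, norm_inv]
    rw [this]
    have := (tendsto_mul_norm_gterm a b c hε).mul_const ‖(c-a-b)‖⁻¹
    simpa using this
  have htel : Tendsto (fun N => ∑ n ∈ Finset.range N, (gterm a b c n - K * gterm a b (c+1) n))
      atTop (𝓝 (0:ℂ)) := by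
    have heq : ∀ N, ∑ n ∈ Finset.range N, (gterm a b c n - K * gterm a b (c+1) n) = u 0 - u N := by
      intro N
      rw [← Finset.sum_range_sub' u N]
      exact Finset.sum_congr rfl (fun n _ => hid n)
    simp only [heq]
    have hu00 : u 0 = 0 := by simp [hu]
    rw [hu00]
    simpa using hu0.const_sub 0
  have htsum0 : ∑' n, (gterm a b c n - K * gterm a b (c+1) n) = 0 :=
    tendsto_nhds_unique hsum.hasSum.tendsto_sum_nat htel
  have hsplit : ∑' n, (gterm a b c n - K * gterm a b (c+1) n)
      = ∑' n, gterm a b c n - K * ∑' n, gterm a b (c+1) n := by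
    rw [Summable.tsum_sub hS1 (hS2.mul_left K), tsum_mul_left]
  rw [hsplit] at htsum0
  linear_combination htsum0

lemma div_div_same_num (NN P Q : ℂ) (hNN : NN ≠ 0) : (NN/P)/(NN/Q) = Q/P := by
  rcases eq_or_ne Q 0 with rfl | hQ
  · simp
  rcases eq_or_ne P 0 with rfl | hP
  · simp
  field_simp
lemma fracaux (x1 x2 y1 y2 p1 p2 q1 q2 f : ℂ) (hy1 : y1 ≠ 0) (hy2 : y2 ≠ 0) (hf : f ≠ 0)
    (h : x1*x2 = y1*y2) :
    (x1*f/p1) * (x2*f/p2) / ((y1*f/q1)*(y2*f/q2)) = (q1*q2)/(p1*p2) := by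
  have e1 : (x1*f/p1) * (x2*f/p2) = ((y1*y2)*(f*f))/(p1*p2) := by
    rw [div_mul_div_comm]; rw [show x1*f*(x2*f) = (x1*x2)*(f*f) by ring, h]
  have e2 : (y1*f/q1) * (y2*f/q2) = ((y1*y2)*(f*f))/(q1*q2) := by
    rw [div_mul_div_comm]; congr 1; ring
  rw [e1, e2, div_div_same_num _ _ _ (by simp [hy1, hy2, hf])]

lemma gauss_iterate (a b c : ℂ) (hc : 0 < c.re) (hε : 0 < (c-a-b).re) (N : ℕ) :
    ∑' n, gterm a b c n =
      (∏ k ∈ Finset.range N, (((c-a)+k)*((c-b)+k)/((c+k)*((c-a-b)+k)))) *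
        ∑' n, gterm a b (c+N) n := by
  induction N with
  | zero => simp
  | succ N ih =>
      have hcN : 0 < (c+N).re := re_add_nat_pos hc N
      have hεN : 0 < ((c+N)-a-b).re := by
        have : (c+N)-a-b = (c-a-b) + N := by ring
        rw [this]; exact re_add_nat_pos hε N
      have hcont := contiguous a b (c+(N:ℂ)) hcN hεN
      have hfact : (((c+N)-a)*((c+N)-b)/((c+N)*((c+N)-a-b)))
          = (((c-a)+N)*((c-b)+N)/((c+N)*((c-a-b)+N))) := by ring
      have hcast : (c+(N:ℂ))+1 = c+((N+1 : ℕ):ℂ) := by push_cast; ring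
      rw [ih, hcont, hfact, hcast, Finset.prod_range_succ]
      push_cast
      ring

lemma Qlim (a b c : ℂ) (hc : 0 < c.re) (hca : 0 < (c-a).re) (hcb : 0 < (c-b).re)
    (hε : 0 < (c-a-b).re) :
    Tendsto (fun N : ℕ => ∏ k ∈ Finset.range (N+1), (((c-a)+k)*((c-b)+k)/((c+k)*((c-a-b)+k))))
      atTop (𝓝 (Complex.Gamma c * Complex.Gamma (c-a-b) /
        (Complex.Gamma (c-a) * Complex.Gamma (c-b)))) := by
  have hP : ∀ (s:ℂ), 0 < s.re → ∀ M : ℕ, (∏ j ∈ Finset.range M, (s + (j:ℂ))) ≠ 0 := by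
    intro s hs M
    exact Finset.prod_ne_zero_iff.mpr (fun j _ => re_pos_ne_zero (re_add_nat_pos hs j))
  have hsplit : ∀ N : ℕ, (∏ k ∈ Finset.range (N+1), (((c-a)+k)*((c-b)+k)/((c+k)*((c-a-b)+k))))
      = ((∏ j ∈ Finset.range (N+1), ((c-a) + (j:ℂ))) * ∏ j ∈ Finset.range (N+1), ((c-b) + (j:ℂ))) /
        ((∏ j ∈ Finset.range (N+1), (c + (j:ℂ))) * ∏ j ∈ Finset.range (N+1), ((c-a-b) + (j:ℂ))) := by
    intro N
    rw [← Finset.prod_mul_distrib, ← Finset.prod_mul_distrib, ← Finset.prod_div_distrib]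
  have hGeq : ∀ N : ℕ, 1 ≤ N →
      Complex.GammaSeq c N * Complex.GammaSeq (c-a-b) N /
        (Complex.GammaSeq (c-a) N * Complex.GammaSeq (c-b) N)
      = (∏ k ∈ Finset.range (N+1), (((c-a)+k)*((c-b)+k)/((c+k)*((c-a-b)+k)))) := by
    intro N hN
    have hN0 : (N:ℂ) ≠ 0 := Nat.cast_ne_zero.mpr (by omega)
    have hfac : ((N.factorial : ℕ):ℂ) ≠ 0 := Nat.cast_ne_zero.mpr N.factorial_ne_zero
    have hkey : (N:ℂ)^c * (N:ℂ)^(c-a-b) = (N:ℂ)^(c-a) * (N:ℂ)^(c-b) := by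
      rw [← Complex.cpow_add _ _ hN0, ← Complex.cpow_add _ _ hN0]
      congr 1
      ring
    have hpow : ∀ s : ℂ, (N:ℂ)^s ≠ 0 := fun s => by
      rw [Ne, Complex.cpow_eq_zero_iff]; tauto
    rw [hsplit N]
    rw [Complex.GammaSeq, Complex.GammaSeq, Complex.GammaSeq, Complex.GammaSeq]
    exact fracaux _ _ _ _ _ _ _ _ _ (hpow _) (hpow _) hfac hkey
  have hGlim : Tendsto (fun N : ℕ => Complex.GammaSeq c N * Complex.GammaSeq (c-a-b) N /
      (Complex.GammaSeq (c-a) N * Complex.GammaSeq (c-b) N)) atTop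
      (𝓝 (Complex.Gamma c * Complex.Gamma (c-a-b) / (Complex.Gamma (c-a) * Complex.Gamma (c-b)))) :=
    ((Complex.GammaSeq_tendsto_Gamma c).mul (Complex.GammaSeq_tendsto_Gamma (c-a-b))).div
      ((Complex.GammaSeq_tendsto_Gamma (c-a)).mul (Complex.GammaSeq_tendsto_Gamma (c-b)))
      (mul_ne_zero (Complex.Gamma_ne_zero_of_re_pos hca) (Complex.Gamma_ne_zero_of_re_pos hcb))
  apply hGlim.congr'
  filter_upwards [eventually_ge_atTop 1] with N hN
  exact hGeq N hN

set_option maxHeartbeats 1000000 in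
lemma tail_tendsto (a b c : ℂ) (hc : 0 < c.re) (hε : 0 < (c-a-b).re) :
    Tendsto (fun N : ℕ => ∑' n, gterm a b (c+N) n) atTop (𝓝 1) := by
  set γ := c.re with hγ
  obtain ⟨N₀, hN₀⟩ := exists_nat_ge (‖a‖ + ‖b‖ + 1)
  have hγN₀ : 0 < γ + N₀ := by positivity
  set D : ℕ → ℝ := fun n => pochR ‖a‖ n * pochR ‖b‖ n / (pochR (γ+N₀) n * n.factorial)
    with hD
  have hDeq : ∀ n, D n = ‖gterm ((‖a‖:ℝ):ℂ) ((‖b‖:ℝ):ℂ) (((γ+N₀:ℝ)):ℂ) n‖ := by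
    intro n
    have : gterm ((‖a‖:ℝ):ℂ) ((‖b‖:ℝ):ℂ) (((γ+N₀:ℝ)):ℂ) n = ((D n : ℝ):ℂ) := by
      rw [gterm, ← ofReal_pochR, ← ofReal_pochR, ← ofReal_pochR, hD]
      push_cast
      ring
    have h1 : (0:ℝ) < pochR (γ+N₀) n := pochR_pos hγN₀ n
    have h2 : (0:ℝ) ≤ pochR ‖a‖ n := pochR_nonneg (norm_nonneg a) n
    have h3 : (0:ℝ) ≤ pochR ‖b‖ n := pochR_nonneg (norm_nonneg b) n
    have h4 : (0:ℝ) < (n.factorial:ℝ) := by exact_mod_cast n.factorial_pos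
    have hnn : (0:ℝ) ≤ D n := by rw [hD]; positivity
    rw [this, Complex.norm_real, Real.norm_eq_abs, _root_.abs_of_nonneg hnn]
  have hDsum : Summable D := by
    have hre : 0 < ((((γ+N₀:ℝ)):ℂ) - ((‖a‖:ℝ):ℂ) - ((‖b‖:ℝ):ℂ)).re := by
      simp only [Complex.sub_re, Complex.ofReal_re]
      linarith
    have := summable_norm_gterm ((‖a‖:ℝ):ℂ) ((‖b‖:ℝ):ℂ) (((γ+N₀:ℝ)):ℂ) hre
    exact this.congr (fun n => (hDeq n).symm)
  have hDtail : Summable (fun n => D (n+1)) := (summable_nat_add_iff 1).mpr hDsum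
  -- termwise bound
  have hbound : ∀ N : ℕ, N₀ ≤ N → ∀ n : ℕ,
      ‖gterm a b (c+N) (n+1)‖ ≤ ((γ+N₀)/(γ+N)) * D (n+1) := by
    intro N hN n
    have hγN : 0 < γ + (N:ℝ) := by
      have : (N₀:ℝ) ≤ N := by exact_mod_cast hN
      linarith
    have h1 := norm_poch_le a (n+1)
    have h2 := norm_poch_le b (n+1)
    have h3 : pochR (γ+(N:ℝ)) (n+1) ≤ ‖poch (c+(N:ℂ)) (n+1)‖ := by
      have := pochR_le_norm_poch (c := c+(N:ℂ)) (by simp [hγ] at hγN ⊢; linarith) (n+1)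
      rwa [show (c+(N:ℂ)).re = γ+(N:ℝ) from by simp [hγ]] at this
    have h4 : (γ+(N:ℝ))/(γ+N₀) * pochR (γ+N₀) (n+1) ≤ pochR (γ+(N:ℝ)) (n+1) := by
      rw [pochR_succ_left (γ+N₀), pochR_succ_left (γ+(N:ℝ))]
      have hm : pochR (γ+N₀+1) n ≤ pochR (γ+(N:ℝ)+1) n := by
        apply pochR_mono (by linarith)
        have : (N₀:ℝ) ≤ N := by exact_mod_cast hN
        linarith
      have hp : 0 ≤ pochR (γ+N₀+1) n := pochR_nonneg (by linarith) n
      calc (γ+(N:ℝ))/(γ+N₀) * ((γ+N₀) * pochR (γ+N₀+1) n)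
          = (γ+(N:ℝ)) * pochR (γ+N₀+1) n := by field_simp
        _ ≤ (γ+(N:ℝ)) * pochR (γ+(N:ℝ)+1) n := by
            exact mul_le_mul_of_nonneg_left hm hγN.le
    have hnorm : ‖gterm a b (c+N) (n+1)‖
        = ‖poch a (n+1)‖ * ‖poch b (n+1)‖ / (‖poch (c+(N:ℂ)) (n+1)‖ * ((n+1).factorial : ℝ)) := by
      rw [gterm]
      simp only [norm_div, norm_mul, Complex.norm_natCast]
    have hfpos : (0:ℝ) < ((n+1).factorial : ℝ) := by exact_mod_cast (n+1).factorial_pos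
    have hPC0 : (0:ℝ) < pochR (γ+N₀) (n+1) := pochR_pos hγN₀ (n+1)
    have hPCN : (0:ℝ) < pochR (γ+(N:ℝ)) (n+1) := pochR_pos hγN (n+1)
    have hden : 0 < (γ+(N:ℝ))/(γ+N₀) * pochR (γ+N₀) (n+1) * ((n+1).factorial : ℝ) := by
      positivity
    rw [hnorm]
    calc ‖poch a (n+1)‖ * ‖poch b (n+1)‖ / (‖poch (c+(N:ℂ)) (n+1)‖ * ((n+1).factorial : ℝ))
        ≤ pochR ‖a‖ (n+1) * pochR ‖b‖ (n+1) /
            ((γ+(N:ℝ))/(γ+N₀) * pochR (γ+N₀) (n+1) * ((n+1).factorial : ℝ)) := by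
          apply div_le_div₀ (mul_nonneg (pochR_nonneg (norm_nonneg a) _)
            (pochR_nonneg (norm_nonneg b) _))
            (mul_le_mul h1 h2 (norm_nonneg _) (pochR_nonneg (norm_nonneg a) _)) hden
          apply mul_le_mul_of_nonneg_right (le_trans h4 h3) hfpos.le
      _ = ((γ+N₀)/(γ+N)) * D (n+1) := by
          rw [hD]
          field_simp
  -- summability of the shifted sequence at c+N
  have hsummN : ∀ N : ℕ, Summable (gterm a b (c+N)) := by
    intro N
    apply summable_gterm
    have : (c+(N:ℂ))-a-b = (c-a-b) + (N:ℂ) := by ring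
    rw [this]
    simp only [Complex.add_re, Complex.natCast_re]
    have : (0:ℝ) ≤ N := N.cast_nonneg
    linarith
  have hsummNnorm : ∀ N : ℕ, Summable (fun n => ‖gterm a b (c+N) (n+1)‖) := by
    intro N
    apply (summable_nat_add_iff (f := fun n => ‖gterm a b (c+(N:ℂ)) n‖) 1).mpr
    apply summable_norm_gterm
    have : (c+(N:ℂ))-a-b = (c-a-b) + (N:ℂ) := by ring
    rw [this]
    simp only [Complex.add_re, Complex.natCast_re]
    have : (0:ℝ) ≤ N := N.cast_nonneg
    linarith
  rw [tendsto_iff_norm_sub_tendsto_zero]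
  set St := ∑' n, D (n+1) with hSt
  have hzero : Tendsto (fun N : ℕ => ((γ+N₀)/(γ+(N:ℝ))) * St) atTop (𝓝 0) := by
    have h1 : Tendsto (fun N : ℕ => γ+(N:ℝ)) atTop atTop :=
      tendsto_atTop_add_const_left _ γ (tendsto_natCast_atTop_atTop)
    have h2 : Tendsto (fun N : ℕ => (γ+(N:ℝ))⁻¹) atTop (𝓝 0) := h1.inv_tendsto_atTop
    have := (h2.const_mul ((γ+N₀)*St))
    rw [mul_zero] at this
    apply this.congr
    intro N
    field_simp
  apply squeeze_zero' (Filter.Eventually.of_forall (fun N => norm_nonneg _)) ?_ hzero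
  filter_upwards [eventually_ge_atTop N₀] with N hN
  have hsplitN : ∑' n, gterm a b (c+N) n = 1 + ∑' n, gterm a b (c+N) (n+1) := by
    rw [Summable.tsum_eq_zero_add (hsummN N)]
    rw [gterm_zero]
  rw [hsplitN]
  have : ‖1 + ∑' n, gterm a b (c+N) (n+1) - 1‖ = ‖∑' n, gterm a b (c+N) (n+1)‖ := by
    congr 1; ring
  rw [this]
  calc ‖∑' n, gterm a b (c+N) (n+1)‖ ≤ ∑' n, ‖gterm a b (c+N) (n+1)‖ :=
        norm_tsum_le_tsum_norm (hsummNnorm N)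
    _ ≤ ∑' n, ((γ+N₀)/(γ+(N:ℝ))) * D (n+1) := by
        apply Summable.tsum_le_tsum (fun n => hbound N hN n) (hsummNnorm N) (hDtail.mul_left _)
    _ = ((γ+N₀)/(γ+(N:ℝ))) * St := by rw [tsum_mul_left]

lemma gauss_sum (a b c : ℂ) (hc : 0 < c.re) (hca : 0 < (c-a).re) (hcb : 0 < (c-b).re)
    (hε : 0 < (c-a-b).re) :
    ∑' n, gterm a b c n
      = Complex.Gamma c * Complex.Gamma (c-a-b) / (Complex.Gamma (c-a) * Complex.Gamma (c-b)) := by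
  have hconst : (fun N : ℕ => (∏ k ∈ Finset.range (N+1),
      (((c-a)+k)*((c-b)+k)/((c+k)*((c-a-b)+k)))) * ∑' n, gterm a b (c+((N+1:ℕ):ℂ)) n)
      = fun _ : ℕ => ∑' n, gterm a b c n :=
    funext fun N => (gauss_iterate a b c hc hε (N+1)).symm
  have htails : Tendsto (fun N : ℕ => ∑' n, gterm a b (c+((N+1:ℕ):ℂ)) n) atTop (𝓝 1) :=
    (tail_tendsto a b c hc hε).comp (tendsto_add_atTop_nat 1)
  have h1 := (Qlim a b c hc hca hcb hε).mul htails
  rw [mul_one, hconst] at h1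
  exact tendsto_nhds_unique tendsto_const_nhds h1

lemma tanh_formula (t : ℝ) :
    Real.tanh t = (1 - Real.exp (-2*t))/(1 + Real.exp (-2*t)) := by
  have he : (0:ℝ) < Real.exp t + Real.exp (-t) := by positivity
  have hd : (0:ℝ) < 1 + Real.exp (-2*t) := by positivity
  have hA : Real.exp t * Real.exp (-2*t) = Real.exp (-t) := by
    rw [← Real.exp_add]; congr 1; ring
  rw [Real.tanh_eq_sinh_div_cosh, Real.sinh_eq, Real.cosh_eq]
  have hhalf : (Real.exp t - Real.exp (-t))/2/((Real.exp t + Real.exp (-t))/2)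
      = (Real.exp t - Real.exp (-t))/(Real.exp t + Real.exp (-t)) := by
    field_simp
  rw [hhalf, div_eq_div_iff he.ne' hd.ne']
  linear_combination 2 * hA

lemma tanh_tendsto : Tendsto Real.tanh atTop (𝓝 1) := by
  have hexp : Tendsto (fun t : ℝ => Real.exp (-2*t)) atTop (𝓝 0) := by
    apply Real.tendsto_exp_atBot.comp
    have h2 : Tendsto (fun t : ℝ => 2*t) atTop atTop :=
      (tendsto_id (α := ℝ)).const_mul_atTop two_pos
    have := tendsto_neg_atTop_atBot.comp h2
    apply this.congr
    intro t
    simp only [Function.comp_apply]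
    ring
  have hc1 : Tendsto (fun _ : ℝ => (1:ℝ)) atTop (𝓝 1) := tendsto_const_nhds
  have h := (hc1.sub hexp).div (hc1.add hexp) (by norm_num)
  simp only [sub_zero, add_zero, div_one] at h
  apply h.congr
  intro t
  rw [tanh_formula]
  rfl

lemma tanh_sq_le_one (t : ℝ) : Real.tanh t ^ 2 ≤ 1 := by
  have hcosh : (1:ℝ) ≤ Real.cosh t := Real.one_le_cosh t
  have h := Real.cosh_sq t
  rw [Real.tanh_eq_sinh_div_cosh, div_pow, div_le_one (by positivity)]
  nlinarith

lemma hypF_tendsto_gauss (a b c : ℂ) (hsum : Summable (fun n => ‖gterm a b c n‖)) :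
    Tendsto (fun t : ℝ => hypF a b c ((Real.tanh t ^ 2 : ℝ) : ℂ)) atTop
      (𝓝 (∑' n, gterm a b c n)) := by
  have hx1 : Tendsto (fun t : ℝ => ((Real.tanh t ^ 2 : ℝ) : ℂ)) atTop (𝓝 1) := by
    have h1 : Tendsto (fun t : ℝ => Real.tanh t ^ 2) atTop (𝓝 1) := by
      have := tanh_tendsto.pow 2
      simpa only [one_pow] using this
    have h2 : Tendsto (fun t : ℝ => ((Real.tanh t ^ 2 : ℝ) : ℂ)) atTop (𝓝 (((1:ℝ):ℂ))) :=
      (Complex.continuous_ofReal.tendsto 1).comp h1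
    simpa only [Complex.ofReal_one] using h2
  have key := tendsto_tsum_of_dominated_convergence
    (f := fun (t : ℝ) (n : ℕ) => gterm a b c n * ((Real.tanh t ^ 2 : ℝ) : ℂ) ^ n)
    (g := fun n => gterm a b c n) (bound := fun n => ‖gterm a b c n‖) hsum
    (fun n => by
      have := (hx1.pow n).const_mul (gterm a b c n)
      simpa using this)
    (by
      apply Filter.Eventually.of_forall
      intro t n
      rw [norm_mul, norm_pow]
      have habs : ‖((Real.tanh t ^ 2 : ℝ) : ℂ)‖ ≤ 1 := by
        rw [Complex.norm_real, Real.norm_eq_abs, _root_.abs_of_nonneg (sq_nonneg _)]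
        exact tanh_sq_le_one t
      calc ‖gterm a b c n‖ * ‖((Real.tanh t ^ 2 : ℝ) : ℂ)‖ ^ n
          ≤ ‖gterm a b c n‖ * 1 := by
            apply mul_le_mul_of_nonneg_left _ (norm_nonneg _)
            exact pow_le_one₀ (norm_nonneg _) habs
        _ = ‖gterm a b c n‖ := mul_one _)
  exact key

/-- Asymptotics at infinity of the rank-one spherical function of `K`-type `δ`:
for `Re z > 0`, `(2 cosh t)^{-l(z)} φ_z(t) → (Γ(s + n/2)/Γ(n/2)) c(z)` as `t → ∞`. -/
theorem spherical_asymptotics (mα m2α : ℕ) (r s : ℤ) (hr : 0 ≤ r) (hrs : r ≤ s)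
    (z : ℂ) (hz : 0 < z.re) :
    Tendsto
      (fun t : ℝ => ((2 * Real.cosh t : ℝ) : ℂ) ^ (-(lFun mα m2α z)) *
        sphFun mα m2α s r z t)
      atTop
      (𝓝 (Complex.Gamma ((s : ℂ) + ((mα : ℂ) + (m2α : ℂ) + 1) / 2) /
        Complex.Gamma (((mα : ℂ) + (m2α : ℂ) + 1) / 2) * cHC mα m2α z)) := by
  set l := lFun mα m2α z with hl
  set aa := aFun mα m2α s r z with haa
  set bb := bFun mα m2α s r z with hbb
  set cc := cZero mα m2α s with hcc
  have hs0 : (0:ℝ) ≤ (s:ℝ) := by exact_mod_cast hr.trans hrs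
  have hr0 : (0:ℝ) ≤ (r:ℝ) := by exact_mod_cast hr
  have hrs' : (r:ℝ) ≤ (s:ℝ) := by exact_mod_cast hrs
  have hm0 : (0:ℝ) ≤ (mα:ℝ) := Nat.cast_nonneg _
  have hm20 : (0:ℝ) ≤ (m2α:ℝ) := Nat.cast_nonneg _
  -- parameter identities
  have F1 : cc - aa - bb = z := by
    rw [hcc, haa, hbb]; unfold cZero aFun bFun lFun rhoH; ring
  have F2 : cc - bb = (z + (mα : ℂ) / 2 + (m2α : ℂ) + (s : ℂ) + (r : ℂ)) / 2 := by
    rw [hcc, hbb]; unfold cZero bFun lFun rhoH; ring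
  have F3 : cc - aa = (z + (mα : ℂ) / 2 + 1 + (s : ℂ) - (r : ℂ)) / 2 := by
    rw [hcc, haa]; unfold cZero aFun lFun rhoH; ring
  -- real parts
  have hre2 : ∀ u : ℂ, (u/2).re = u.re/2 := fun u => by
    rw [show (2:ℂ) = ((2:ℝ):ℂ) by norm_num, Complex.div_ofReal_re]
  have hccre : 0 < cc.re := by
    have : cc = (((s:ℝ) + ((mα:ℝ)+(m2α:ℝ)+1)/2 : ℝ) : ℂ) := by
      rw [hcc]; unfold cZero; push_cast; ring
    rw [this, Complex.ofReal_re]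
    positivity
  have hX1re : 0 < ((z + (mα : ℂ) / 2 + (m2α : ℂ) + (s : ℂ) + (r : ℂ)) / 2).re := by
    rw [hre2]
    have : (z + (mα : ℂ) / 2 + (m2α : ℂ) + (s : ℂ) + (r : ℂ))
        = z + ((((mα:ℝ)/2 + (m2α:ℝ) + (s:ℝ) + (r:ℝ)) : ℝ) : ℂ) := by push_cast; ring
    rw [this, Complex.add_re, Complex.ofReal_re]
    have h0 : (0:ℝ) ≤ (mα:ℝ)/2 + (m2α:ℝ) + (s:ℝ) + (r:ℝ) := by positivity
    linarith
  have hX2re : 0 < ((z + (mα : ℂ) / 2 + 1 + (s : ℂ) - (r : ℂ)) / 2).re := by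
    rw [hre2]
    have : (z + (mα : ℂ) / 2 + 1 + (s : ℂ) - (r : ℂ))
        = z + ((((mα:ℝ)/2 + 1 + (s:ℝ) - (r:ℝ)) : ℝ) : ℂ) := by push_cast; ring
    rw [this, Complex.add_re, Complex.ofReal_re]
    have h0 : (0:ℝ) ≤ (mα:ℝ)/2 + 1 + (s:ℝ) - (r:ℝ) := by linarith
    linarith
  have hD1re : 0 < ((z + (mα : ℂ) / 2 + (m2α : ℂ)) / 2).re := by
    rw [hre2]
    have : (z + (mα : ℂ) / 2 + (m2α : ℂ)) = z + ((((mα:ℝ)/2 + (m2α:ℝ)) : ℝ) : ℂ) := by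
      push_cast; ring
    rw [this, Complex.add_re, Complex.ofReal_re]
    have h0 : (0:ℝ) ≤ (mα:ℝ)/2 + (m2α:ℝ) := by positivity
    linarith
  have hD2re : 0 < ((z + (mα : ℂ) / 2 + 1) / 2).re := by
    rw [hre2]
    have : (z + (mα : ℂ) / 2 + 1) = z + ((((mα:ℝ)/2 + 1) : ℝ) : ℂ) := by push_cast; ring
    rw [this, Complex.add_re, Complex.ofReal_re]
    have h0 : (0:ℝ) ≤ (mα:ℝ)/2 + 1 := by positivity
    linarith
  have hn2re : 0 < (((mα : ℂ) + (m2α : ℂ) + 1) / 2).re := by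
    rw [hre2]
    have : ((mα : ℂ) + (m2α : ℂ) + 1) = ((((mα:ℝ) + (m2α:ℝ) + 1) : ℝ) : ℂ) := by push_cast; ring
    rw [this, Complex.ofReal_re]
    positivity
  have hεre : 0 < (cc - aa - bb).re := by rw [F1]; exact hz
  have hcare : 0 < (cc - aa).re := by rw [F3]; exact hX2re
  have hcbre : 0 < (cc - bb).re := by rw [F2]; exact hX1re
  -- pointwise simplification of the function
  have key : ∀ t : ℝ, ((2 * Real.cosh t : ℝ) : ℂ) ^ (-l) * sphFun mα m2α s r z t
      = ((2:ℂ) ^ (-l) * cCoef mα m2α s r z) * ((Real.tanh t : ℝ) : ℂ) ^ s *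
        hypF aa bb cc ((Real.tanh t ^ 2 : ℝ) : ℂ) := by
    intro t
    have hcosh0 : ((Real.cosh t : ℝ) : ℂ) ≠ 0 :=
      Complex.ofReal_ne_zero.mpr (Real.cosh_pos t).ne'
    have hsplit : ((2 * Real.cosh t : ℝ) : ℂ) ^ (-l)
        = (2:ℂ) ^ (-l) * ((Real.cosh t : ℝ) : ℂ) ^ (-l) := by
      rw [show ((2 * Real.cosh t : ℝ) : ℂ) = ((2:ℝ):ℂ) * ((Real.cosh t : ℝ):ℂ) by
          push_cast; ring,
        Complex.mul_cpow_ofReal_nonneg (by norm_num) (Real.cosh_pos t).le]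
      norm_num
    have hcc1 : ((Real.cosh t : ℝ) : ℂ) ^ (-l) * ((Real.cosh t : ℝ) : ℂ) ^ l = 1 := by
      rw [← Complex.cpow_add _ _ hcosh0]
      simp
    rw [sphFun, hsplit]
    calc (2:ℂ) ^ (-l) * ((Real.cosh t : ℝ) : ℂ) ^ (-l) *
          (cCoef mα m2α s r z * ((Real.tanh t : ℝ) : ℂ) ^ s * ((Real.cosh t : ℝ) : ℂ) ^ l *
            hypF aa bb cc ((Real.tanh t ^ 2 : ℝ) : ℂ))
        = ((2:ℂ) ^ (-l) * cCoef mα m2α s r z) * ((Real.tanh t : ℝ) : ℂ) ^ s *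
            hypF aa bb cc ((Real.tanh t ^ 2 : ℝ) : ℂ) *
            (((Real.cosh t : ℝ) : ℂ) ^ (-l) * ((Real.cosh t : ℝ) : ℂ) ^ l) := by ring
      _ = _ := by rw [hcc1, mul_one]
  -- limits
  have hT : Tendsto (fun t : ℝ => ((Real.tanh t : ℝ) : ℂ) ^ s) atTop (𝓝 1) := by
    have htc : Tendsto (fun t : ℝ => ((Real.tanh t : ℝ) : ℂ)) atTop (𝓝 (((1:ℝ):ℂ))) :=
      (Complex.continuous_ofReal.tendsto 1).comp tanh_tendsto
    rw [Complex.ofReal_one] at htc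
    have hzc : ContinuousAt (fun w : ℂ => w ^ s) 1 := continuousAt_zpow₀ 1 s (Or.inl one_ne_zero)
    have := hzc.tendsto.comp htc
    rwa [one_zpow] at this
  have hH := hypF_tendsto_gauss aa bb cc (summable_norm_gterm aa bb cc hεre)
  have hconst : Tendsto (fun _ : ℝ => (2:ℂ) ^ (-l) * cCoef mα m2α s r z) atTop
      (𝓝 ((2:ℂ) ^ (-l) * cCoef mα m2α s r z)) := tendsto_const_nhds
  have hfull := (hconst.mul hT).mul hH
  rw [mul_one] at hfull
  have hfull2 : Tendsto
      (fun t : ℝ => ((2 * Real.cosh t : ℝ) : ℂ) ^ (-l) * sphFun mα m2α s r z t) atTop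
      (𝓝 ((2:ℂ) ^ (-l) * cCoef mα m2α s r z * ∑' n, gterm aa bb cc n)) := by
    apply hfull.congr
    intro t
    exact (key t).symm
  -- final value computation
  have hval : (2:ℂ) ^ (-l) * cCoef mα m2α s r z * ∑' n, gterm aa bb cc n
      = Complex.Gamma ((s : ℂ) + ((mα : ℂ) + (m2α : ℂ) + 1) / 2) /
        Complex.Gamma (((mα : ℂ) + (m2α : ℂ) + 1) / 2) * cHC mα m2α z := by
    rw [gauss_sum aa bb cc hccre hcare hcbre hεre, F1, F2, F3]
    have hGX1 := Complex.Gamma_ne_zero_of_re_pos hX1re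
    have hGX2 := Complex.Gamma_ne_zero_of_re_pos hX2re
    have hGD1 := Complex.Gamma_ne_zero_of_re_pos hD1re
    have hGD2 := Complex.Gamma_ne_zero_of_re_pos hD2re
    have hGn2 := Complex.Gamma_ne_zero_of_re_pos hn2re
    have e1 : (((mα : ℂ) / 2 + 1 + z) / 2) = ((z + (mα : ℂ) / 2 + 1) / 2) := by ring
    have e2 : (((mα : ℂ) / 2 + (m2α : ℂ) + z) / 2) = ((z + (mα : ℂ) / 2 + (m2α : ℂ)) / 2) := by
      ring
    have hcceq : (s : ℂ) + ((mα : ℂ) + (m2α : ℂ) + 1) / 2 = cc := by rw [hcc]; unfold cZero; ring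
    rw [cHC, cCoef, e1, e2, hcceq]
    set G1 := Complex.Gamma ((z + (mα : ℂ) / 2 + (m2α : ℂ) + (s : ℂ) + (r : ℂ)) / 2) with hG1
    set G2 := Complex.Gamma ((z + (mα : ℂ) / 2 + 1 + (s : ℂ) - (r : ℂ)) / 2) with hG2
    set GD1 := Complex.Gamma ((z + (mα : ℂ) / 2 + (m2α : ℂ)) / 2) with hGD1d
    set GD2 := Complex.Gamma ((z + (mα : ℂ) / 2 + 1) / 2) with hGD2d
    set Gn2 := Complex.Gamma (((mα : ℂ) + (m2α : ℂ) + 1) / 2) with hGn2d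
    field_simp
    ring
  rw [hval] at hfull2
  exact hfull2
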